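/- Let N be a Poisson(1) random variable and p ∈ (0,1]. Let x = x(p) ∈ (0,1) be the unique solution of x = e^{−px}. Then the Bernoulli(1−x) distribution solves the RDE X =_d max(0, ξ_1 − X_1, …, ξ_N − X_N), where (ξ_i) are i.i.d. Bernoulli(p) and (X_i) are i.i.d. Bernoulli(1−x), all independent of N and each other. -/

import Mathlib

open MeasureTheory ProbabilityTheory
open scoped ENNReal

/-- The Bernoulli(q) distribution on `ℕ` (mass `q` at `1`, mass `1-q` at `0`). -/
noncomputable def bernNat (q : ℝ) : Measure ℕ :=
  (ENNReal.ofReal q) • Measure.dirac 1 + (ENNReal.ofReal (1 - q)) • Measure.dirac 0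


lemma bernNat_apply (q : ℝ) (s : Set ℕ) :
    bernNat q s = ENNReal.ofReal q * s.indicator 1 1 + ENNReal.ofReal (1 - q) * s.indicator 1 0 := by
  simp [bernNat, Measure.dirac_apply]

lemma isProbabilityMeasure_bernNat {q : ℝ} (h0 : 0 ≤ q) (h1 : q ≤ 1) :
    IsProbabilityMeasure (bernNat q) := by
  constructor
  rw [bernNat_apply]
  simp [← ENNReal.ofReal_add h0 (by linarith : (0:ℝ) ≤ 1 - q)]

instance bernNat_finite (q : ℝ) : IsFiniteMeasure (bernNat q) := by
  constructor
  rw [bernNat_apply]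
  exact ENNReal.add_lt_top.mpr ⟨ENNReal.mul_lt_top ENNReal.ofReal_lt_top (by simp),
    ENNReal.mul_lt_top ENNReal.ofReal_lt_top (by simp)⟩

lemma lintegral_bernNat (q : ℝ) (f : ℕ → ℝ≥0∞) :
    ∫⁻ n, f n ∂(bernNat q) = ENNReal.ofReal q * f 1 + ENNReal.ofReal (1 - q) * f 0 := by
  simp [bernNat, lintegral_add_measure, lintegral_smul_measure, lintegral_dirac]

lemma nu_S0 {p x : ℝ} (hp0 : 0 ≤ p) (hp1 : p ≤ 1) (hx0 : 0 ≤ x) (hx1 : x ≤ 1) :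
    (bernNat p).prod (bernNat (1 - x)) {q : ℕ × ℕ | q.1 - q.2 = 0}
      = ENNReal.ofReal (1 - p * x) := by
  haveI := isProbabilityMeasure_bernNat (by linarith : (0:ℝ) ≤ 1-x) (by linarith : (1:ℝ)-x ≤ 1)
  rw [Measure.prod_apply (Set.to_countable _).measurableSet, lintegral_bernNat]
  have h1 : (Prod.mk 1 ⁻¹' {q : ℕ × ℕ | q.1 - q.2 = 0}) = {1, 2} ∪ {b | 3 ≤ b} := by
    ext b; simp [Set.mem_setOf_eq]; omega
  have h0 : (Prod.mk 0 ⁻¹' {q : ℕ × ℕ | q.1 - q.2 = 0}) = Set.univ := by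
    ext b; simp
  rw [h1, h0, bernNat_apply, bernNat_apply]
  have e1 : ((({1, 2} : Set ℕ) ∪ {b | 3 ≤ b}).indicator 1 1 : ℝ≥0∞) = 1 := by
    rw [Set.indicator_of_mem]; · rfl
    · left; simp
  have e0 : ((({1, 2} : Set ℕ) ∪ {b | 3 ≤ b}).indicator 1 0 : ℝ≥0∞) = 0 := by
    rw [Set.indicator_of_notMem]; simp
  rw [e1, e0]
  simp only [Set.indicator_univ, Pi.one_apply, mul_one, mul_zero, add_zero]
  rw [← ENNReal.ofReal_add (by linarith) (by linarith), ← ENNReal.ofReal_mul hp0,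
    ← ENNReal.ofReal_mul (by linarith), ← ENNReal.ofReal_add (by nlinarith) (by nlinarith)]
  congr 1; ring

lemma nu_S2 {p x : ℝ} :
    (bernNat p).prod (bernNat (1 - x)) {q : ℕ × ℕ | 2 ≤ q.1 - q.2} = 0 := by
  rw [Measure.prod_apply (Set.to_countable _).measurableSet, lintegral_bernNat]
  have h1 : (Prod.mk 1 ⁻¹' {q : ℕ × ℕ | 2 ≤ q.1 - q.2}) = ∅ := by
    ext b; simp
  have h0 : (Prod.mk 0 ⁻¹' {q : ℕ × ℕ | 2 ≤ q.1 - q.2}) = ∅ := by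
    ext b; simp
  rw [h1, h0]; simp

/-- Let `N` be Poisson(1), `p ∈ (0,1]` and `x ∈ (0,1)` the unique
solution of `x = e^{-px}`. If `(ξ_i)` are i.i.d. Bernoulli(p) and `(X_i)` are i.i.d.
Bernoulli(1-x), all independent of `N` and of each other, then
`max(0, ξ_1 - X_1, …, ξ_N - X_N)` is again Bernoulli(1-x); here values are in `{0,1}`,
`ξ_i - X_i` is the positive part (truncated subtraction in `ℕ`), and the maximum over
an empty set is `0`. -/
theorem bernoulli_matching_rde
    {Ω : Type*} [MeasurableSpace Ω] (P : Measure Ω) [IsProbabilityMeasure P]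
    (p x : ℝ) (hp : p ∈ Set.Ioc (0:ℝ) 1) (hx : x ∈ Set.Ioo (0:ℝ) 1)
    (hfix : x = Real.exp (-(p * x)))
    (N : Ω → ℕ) (pair : ℕ → Ω → ℕ × ℕ)
    (hN : Measure.map N P = poissonMeasure 1)
    (hpairIndep : iIndepFun pair P)
    (hpairLaw : ∀ i, Measure.map (pair i) P = (bernNat p).prod (bernNat (1 - x)))
    (hNindep : IndepFun N (fun ω i => pair i ω) P) :
    Measure.map
        (fun ω => (Finset.range (N ω)).sup fun i => (pair i ω).1 - (pair i ω).2) P =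
      bernNat (1 - x) := by
  obtain ⟨hp0, hp1⟩ := hp
  obtain ⟨hx0, hx1⟩ := hx
  have hq0 : (0:ℝ) ≤ 1 - p * x := by nlinarith
  haveI hPp : IsProbabilityMeasure (bernNat p) := isProbabilityMeasure_bernNat hp0.le hp1
  haveI hPx : IsProbabilityMeasure (bernNat (1 - x)) :=
    isProbabilityMeasure_bernNat (by linarith) (by linarith)
  set ν : Measure (ℕ × ℕ) := (bernNat p).prod (bernNat (1 - x)) with hνdef
  haveI : IsProbabilityMeasure ν := by rw [hνdef]; infer_instance
  -- a.e. measurability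
  have hNae : AEMeasurable N P := by
    by_contra h
    rw [Measure.map_of_not_aemeasurable h] at hN
    exact (IsProbabilityMeasure.ne_zero (poissonMeasure 1)) hN.symm
  have hpairae : ∀ i, AEMeasurable (pair i) P := by
    intro i
    by_contra h
    have h2 := hpairLaw i
    rw [Measure.map_of_not_aemeasurable h] at h2
    exact (IsProbabilityMeasure.ne_zero ν) h2.symm
  set N' : Ω → ℕ := hNae.mk N with hN'def
  have hNmeas : Measurable N' := hNae.measurable_mk
  have hNeq : N =ᵐ[P] N' := hNae.ae_eq_mk
  set Q : ℕ → Ω → ℕ × ℕ := fun i => (hpairae i).mk (pair i) with hQdef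
  have hQmeas : ∀ i, Measurable (Q i) := fun i => (hpairae i).measurable_mk
  have hQeq : ∀ i, pair i =ᵐ[P] Q i := fun i => (hpairae i).ae_eq_mk
  have hNlaw : Measure.map N' P = poissonMeasure 1 := by
    rw [← Measure.map_congr hNeq]; exact hN
  have hQlaw : ∀ i, Measure.map (Q i) P = ν := by
    intro i; rw [← Measure.map_congr (hQeq i)]; exact hpairLaw i
  -- measurable versions of the summands and of f
  set g : ℕ → Ω → ℕ := fun i ω => (Q i ω).1 - (Q i ω).2 with hgdef
  have hgmeas : ∀ i, Measurable (g i) := fun i =>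
    (measurable_fst.comp (hQmeas i)).sub (measurable_snd.comp (hQmeas i))
  set f' : Ω → ℕ := fun ω => (Finset.range (N' ω)).sup fun i => g i ω with hf'def
  have hsupmeas : ∀ n : ℕ, Measurable fun ω => (Finset.range n).sup fun i => g i ω := by
    intro n
    induction n with
    | zero => simp only [Finset.range_zero, Finset.sup_empty]; exact measurable_const
    | succ n ih =>
      have he : (fun ω => (Finset.range (n+1)).sup fun i => g i ω)
          = fun ω => ((Finset.range n).sup fun i => g i ω) ⊔ g n ω := by
        funext ω; rw [Finset.range_add_one, Finset.sup_insert, sup_comm]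
      rw [he]; exact ih.sup (hgmeas n)
  have hf'meas : Measurable f' := by
    apply measurable_to_countable'
    intro k
    have he : f' ⁻¹' {k}
        = ⋃ n, N' ⁻¹' {n} ∩ (fun ω => (Finset.range n).sup fun i => g i ω) ⁻¹' {k} := by
      ext ω
      simp only [Set.mem_preimage, Set.mem_singleton_iff, Set.mem_iUnion, Set.mem_inter_iff,
        hf'def]
      exact ⟨fun h => ⟨N' ω, rfl, h⟩, fun ⟨n, hn, h⟩ => by rw [hn]; exact h⟩
    rw [he]
    exact MeasurableSet.iUnion fun n => (hNmeas (measurableSet_singleton n)).inter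
      ((hsupmeas n) (measurableSet_singleton k))
  -- replace f by f'
  have hfeq : (fun ω => (Finset.range (N ω)).sup fun i => (pair i ω).1 - (pair i ω).2)
      =ᵐ[P] f' := by
    filter_upwards [hNeq, ae_all_iff.2 hQeq] with ω h1 h2
    rw [hf'def]
    simp only
    rw [h1]
    exact Finset.sup_congr rfl fun i _ => by rw [h2 i]
  rw [Measure.map_congr hfeq]
  -- independence for measurable versions
  have hindep' : IndepFun N' (fun ω i => Q i ω) P := by
    apply hNindep.congr hNeq
    filter_upwards [ae_all_iff.2 hQeq] with ω h
    funext i; exact h i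
  -- the "good" pair set
  set S0 : Set (ℕ × ℕ) := {q | q.1 - q.2 = 0} with hS0def
  have hS0meas : MeasurableSet S0 := (Set.to_countable _).measurableSet
  have hsingle : ∀ i, P (Q i ⁻¹' S0) = ENNReal.ofReal (1 - p * x) := by
    intro i
    rw [← Measure.map_apply (hQmeas i) hS0meas, hQlaw i]
    exact nu_S0 hp0.le hp1 hx0.le hx1.le
  have hprod : ∀ n : ℕ, P (⋂ i ∈ Finset.range n, Q i ⁻¹' S0)
      = ENNReal.ofReal (1 - p * x) ^ n := by
    intro n
    have h1 : P (⋂ i ∈ Finset.range n, Q i ⁻¹' S0)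
        = P (⋂ i ∈ Finset.range n, pair i ⁻¹' S0) := by
      apply measure_congr
      rw [Filter.eventuallyEq_set]
      filter_upwards [ae_all_iff.2 hQeq] with ω h
      simp only [Set.mem_iInter, Set.mem_preimage, h]
    have h2 := hpairIndep.measure_inter_preimage_eq_mul (S := Finset.range n)
      (sets := fun _ => S0) (fun i _ => hS0meas)
    rw [h1, h2]
    have h3 : ∀ i ∈ Finset.range n, P (pair i ⁻¹' S0) = ENNReal.ofReal (1 - p * x) := by
      intro i _
      rw [← hsingle i]
      apply measure_congr
      rw [Filter.eventuallyEq_set]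
      filter_upwards [hQeq i] with ω h
      simp [h]
    rw [Finset.prod_congr rfl h3, Finset.prod_const, Finset.card_range]
  have hNsing : ∀ n : ℕ, P (N' ⁻¹' {n}) = ENNReal.ofReal (Real.exp (-1) / n.factorial) := by
    intro n
    rw [← Measure.map_apply hNmeas (measurableSet_singleton n), hNlaw, poissonMeasure_singleton]
    norm_num
  -- decomposition of {f' = 0}
  have hdecomp : f' ⁻¹' {0}
      = ⋃ n, (N' ⁻¹' {n} ∩ ⋂ i ∈ Finset.range n, Q i ⁻¹' S0) := by
    ext ω
    simp only [Set.mem_preimage, Set.mem_singleton_iff, Set.mem_iUnion, Set.mem_inter_iff,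
      Set.mem_iInter, hf'def, hS0def, Set.mem_setOf_eq]
    constructor
    · intro h
      refine ⟨N' ω, rfl, fun i hi => ?_⟩
      have h2 := Finset.sup_le_iff.mp (le_of_eq h) i hi
      exact Nat.le_zero.mp h2
    · rintro ⟨n, hn, h⟩
      rw [hn]
      have h2 : (Finset.range n).sup (fun i => g i ω) ≤ 0 :=
        Finset.sup_le fun i hi => le_of_eq (h i hi)
      exact Nat.le_zero.mp h2
  have hmeas_piece : ∀ n : ℕ,
      MeasurableSet (N' ⁻¹' {n} ∩ ⋂ i ∈ Finset.range n, Q i ⁻¹' S0) := fun n =>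
    (hNmeas (measurableSet_singleton n)).inter
      (MeasurableSet.biInter (Set.to_countable _) fun i _ => (hQmeas i) hS0meas)
  have hdisj : Pairwise (Function.onFun Disjoint
      fun n => N' ⁻¹' {n} ∩ ⋂ i ∈ Finset.range n, Q i ⁻¹' S0) := by
    intro m n hmn
    refine Set.disjoint_left.mpr ?_
    rintro ω ⟨h1, -⟩ ⟨h2, -⟩
    exact hmn ((Set.mem_singleton_iff.mp h1).symm.trans (Set.mem_singleton_iff.mp h2))
  have hindep_piece : ∀ n : ℕ, P (N' ⁻¹' {n} ∩ ⋂ i ∈ Finset.range n, Q i ⁻¹' S0)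
      = P (N' ⁻¹' {n}) * P (⋂ i ∈ Finset.range n, Q i ⁻¹' S0) := by
    intro n
    have hC : MeasurableSet (⋂ i ∈ Finset.range n, (fun h : ℕ → ℕ × ℕ => h i) ⁻¹' S0) :=
      MeasurableSet.biInter (Set.to_countable _)
        fun i _ => (measurable_pi_apply i) hS0meas
    have hset : (fun ω i => Q i ω) ⁻¹'
          (⋂ i ∈ Finset.range n, (fun h : ℕ → ℕ × ℕ => h i) ⁻¹' S0)
        = ⋂ i ∈ Finset.range n, Q i ⁻¹' S0 := by
      ext ω; simp [Set.mem_iInter]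
    rw [← hset]
    exact hindep'.measure_inter_preimage_eq_mul _ _ (measurableSet_singleton n) hC
  -- mass at 0
  have h0 : Measure.map f' P {0} = ENNReal.ofReal x := by
    rw [Measure.map_apply hf'meas (measurableSet_singleton 0), hdecomp,
      measure_iUnion hdisj hmeas_piece]
    have hterm : ∀ n : ℕ, P (N' ⁻¹' {n} ∩ ⋂ i ∈ Finset.range n, Q i ⁻¹' S0)
        = ENNReal.ofReal (Real.exp (-1) * ((1 - p * x) ^ n / n.factorial)) := by
      intro n
      rw [hindep_piece n, hNsing n, hprod n, ← ENNReal.ofReal_pow hq0,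
        ← ENNReal.ofReal_mul (by positivity)]
      congr 1; ring
    rw [tsum_congr hterm,
      ← ENNReal.ofReal_tsum_of_nonneg
        (fun n => by positivity)
        ((Real.summable_pow_div_factorial _).mul_left _),
      tsum_mul_left]
    have hexp : ∑' n : ℕ, ((1 - p * x) ^ n / (n.factorial : ℝ)) = Real.exp (1 - p * x) := by
      rw [Real.exp_eq_exp_ℝ, NormedSpace.exp_eq_tsum_div]
    rw [hexp, ← Real.exp_add]
    have harg : (-1 : ℝ) + (1 - p * x) = -(p * x) := by ring
    rw [harg]
    conv_rhs => rw [hfix]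
  -- no mass at ≥ 2
  have h2big : Measure.map f' P {k : ℕ | 2 ≤ k} = 0 := by
    rw [Measure.map_apply hf'meas (Set.to_countable _).measurableSet]
    have hsub : f' ⁻¹' {k : ℕ | 2 ≤ k} ⊆ ⋃ i, Q i ⁻¹' {q : ℕ × ℕ | 2 ≤ q.1 - q.2} := by
      intro ω hω
      by_contra h
      simp only [Set.mem_iUnion, Set.mem_preimage, Set.mem_setOf_eq, not_exists, not_le] at h
      have hle : f' ω ≤ 1 := Finset.sup_le fun i _ => by
        have := h i; rw [hgdef]; simp only; omega
      have h2 : 2 ≤ f' ω := hω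
      omega
    refine measure_mono_null hsub (measure_iUnion_null fun i => ?_)
    rw [← Measure.map_apply (hQmeas i) (Set.to_countable _).measurableSet, hQlaw i]
    exact nu_S2
  -- mass at 1
  have h1 : Measure.map f' P {1} = ENNReal.ofReal (1 - x) := by
    have huniv : Measure.map f' P Set.univ = 1 := by
      rw [Measure.map_apply hf'meas MeasurableSet.univ, Set.preimage_univ, measure_univ]
    have hsplit : (Set.univ : Set ℕ) = {0} ∪ ({1} ∪ {k : ℕ | 2 ≤ k}) := by
      ext k; simp; omega
    have hd1 : Disjoint ({0} : Set ℕ) ({1} ∪ {k : ℕ | 2 ≤ k}) := by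
      rw [Set.disjoint_left]; rintro k hk1 hk2
      simp only [Set.mem_singleton_iff] at hk1
      simp only [Set.mem_union, Set.mem_singleton_iff, Set.mem_setOf_eq] at hk2
      omega
    have hd2 : Disjoint ({1} : Set ℕ) ({k : ℕ | 2 ≤ k}) := by
      rw [Set.disjoint_left]; rintro k hk1 hk2
      simp only [Set.mem_singleton_iff] at hk1
      simp only [Set.mem_setOf_eq] at hk2
      omega
    have he : (1 : ℝ≥0∞) = ENNReal.ofReal x + Measure.map f' P {1} := by
      rw [← huniv, hsplit,
        measure_union hd1 (((Set.to_countable _).measurableSet :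
          MeasurableSet ({1} ∪ {k : ℕ | 2 ≤ k}))),
        measure_union hd2 ((Set.to_countable _).measurableSet), h2big, h0, add_zero]
    have he2 : ENNReal.ofReal x + Measure.map f' P {1}
        = ENNReal.ofReal x + ENNReal.ofReal (1 - x) := by
      rw [← he, ← ENNReal.ofReal_add hx0.le (by linarith)]
      norm_num
    exact (ENNReal.add_right_inj ENNReal.ofReal_ne_top).mp he2
  -- conclude
  apply MeasureTheory.Measure.ext_of_singleton
  intro a
  match a with
  | 0 =>
    rw [h0, bernNat_apply]
    rw [Set.indicator_of_notMem (by simp), Set.indicator_of_mem (by simp)]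
    simp only [Pi.one_apply, mul_zero, mul_one, zero_add]
    congr 1; ring
  | 1 =>
    rw [h1, bernNat_apply]
    rw [Set.indicator_of_mem (by simp), Set.indicator_of_notMem (by simp)]
    simp
  | (n+2) =>
    rw [bernNat_apply]
    rw [Set.indicator_of_notMem (by simp), Set.indicator_of_notMem (by simp)]
    simp only [mul_zero, add_zero]
    exact measure_mono_null (by intro k hk; simp at hk; simp [hk]) h2big
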